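/- arXiv:2503.13756 — 2 statements merged into one kernel-verified Lean document; each statement's English description precedes it below -/
import Mathlib

section
/- Let f be a probability density on ℝ² supported on the closed unit disk, let θ ≥ 0, and let R_θ denote rotation of the plane by angle θ. Then for every p ≥ 1, the 1-D p-Wasserstein distance between the line projection of f at angle 0 and the line projection of f ∘ R_θ^{-1} at angle 0 satisfies d_{Wp}(P₀ f, P₀ (f ∘ R_θ^{-1})) ≤ θ. Equivalently, if two lines through the origin differ by angle θ, the p-Wasserstein distance between the corresponding 1-D projections of f is at most θ. -/
open MeasureTheory Real Set

/-- CDF of a density `μ` on `ℝ`: `F_μ(t) = ∫_{-∞}^t μ`. -/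
noncomputable def cdfOf (μ : ℝ → ℝ) (t : ℝ) : ℝ := ∫ x in Set.Iic t, μ x

/-- Quantile function `Q_μ(z) = inf {t : F_μ(t) ≥ z}`. -/
noncomputable def quantileOf (μ : ℝ → ℝ) (z : ℝ) : ℝ := sInf {t : ℝ | z ≤ cdfOf μ t}

/-- `d_{Wp}^p(μ, ν) = ∫₀¹ |Q_μ(z) − Q_ν(z)|^p dz`. -/
noncomputable def wassersteinPow (p : ℝ) (μ ν : ℝ → ℝ) : ℝ :=
  ∫ z in Set.Ioo (0:ℝ) 1, |quantileOf μ z - quantileOf ν z| ^ p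

/-- 1-D `p`-Wasserstein distance between densities. -/
noncomputable def wasserstein (p : ℝ) (μ ν : ℝ → ℝ) : ℝ :=
  (wassersteinPow p μ ν) ^ (1 / p)

/-- Line projection of an image `f : ℝ² → ℝ` at angle `θ`:
`P_θ f(s) = ∫ f(s(cos θ, sin θ) + t(−sin θ, cos θ)) dt`. -/
noncomputable def lineProj (f : ℝ × ℝ → ℝ) (θ : ℝ) (s : ℝ) : ℝ :=
  ∫ t : ℝ, f (s * Real.cos θ - t * Real.sin θ, s * Real.sin θ + t * Real.cos θ)

/-- `d_{SWp}^p(f, g) = (1/2π) ∫₀^{2π} d_{Wp}^p(P_θ f, P_θ g) dθ`. -/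
noncomputable def slicedWassersteinPow (p : ℝ) (f g : ℝ × ℝ → ℝ) : ℝ :=
  (1 / (2 * Real.pi)) * ∫ θ in Set.Ioo (0:ℝ) (2 * Real.pi),
    wassersteinPow p (lineProj f θ) (lineProj g θ)

/-- Sliced `p`-Wasserstein distance between two images. -/
noncomputable def slicedWasserstein (p : ℝ) (f g : ℝ × ℝ → ℝ) : ℝ :=
  (slicedWassersteinPow p f g) ^ (1 / p)

/-- Rotation of an image by angle `α`: `(R_α g)(x) = g(R_α⁻¹ x)`. -/
noncomputable def rotImage (α : ℝ) (g : ℝ × ℝ → ℝ) : ℝ × ℝ → ℝ :=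
  fun x => g (x.1 * Real.cos α + x.2 * Real.sin α, -x.1 * Real.sin α + x.2 * Real.cos α)

noncomputable def rotLM (θ : ℝ) : (ℝ × ℝ) →ₗ[ℝ] (ℝ × ℝ) :=
  Matrix.toLin (Module.Basis.finTwoProd ℝ) (Module.Basis.finTwoProd ℝ)
    !![Real.cos θ, Real.sin θ; -Real.sin θ, Real.cos θ]

lemma rotLM_apply (θ : ℝ) (x : ℝ × ℝ) :
    rotLM θ x = (x.1 * Real.cos θ + x.2 * Real.sin θ, -x.1 * Real.sin θ + x.2 * Real.cos θ) := by
  rw [rotLM, Matrix.toLin_finTwoProd_apply, Prod.mk.injEq]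
  exact ⟨by ring, by ring⟩

lemma rotLM_det (θ : ℝ) : LinearMap.det (rotLM θ) = 1 := by
  rw [rotLM, LinearMap.det_toLin, Matrix.det_fin_two_of]
  nlinarith [Real.sin_sq_add_cos_sq θ]

lemma rotLM_mp (θ : ℝ) :
    MeasurePreserving (rotLM θ) (volume : Measure (ℝ × ℝ)) volume := by
  have hdet : LinearMap.det (rotLM θ) ≠ 0 := by rw [rotLM_det]; norm_num
  refine ⟨(LinearMap.continuous_of_finiteDimensional _).measurable, ?_⟩
  rw [Measure.map_linearMap_addHaar_eq_smul_addHaar volume hdet, rotLM_det]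
  simp

noncomputable def rotHomeo (θ : ℝ) : (ℝ × ℝ) ≃ₜ (ℝ × ℝ) where
  toFun := rotLM θ
  invFun := rotLM (-θ)
  left_inv := by
    intro x
    rw [Prod.ext_iff]
    constructor
    · simp only [rotLM_apply, Real.cos_neg, Real.sin_neg]
      linear_combination x.1 * Real.sin_sq_add_cos_sq θ
    · simp only [rotLM_apply, Real.cos_neg, Real.sin_neg]
      linear_combination x.2 * Real.sin_sq_add_cos_sq θ
  right_inv := by
    intro x
    rw [Prod.ext_iff]
    constructor
    · simp only [rotLM_apply, Real.cos_neg, Real.sin_neg]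
      linear_combination x.1 * Real.sin_sq_add_cos_sq θ
    · simp only [rotLM_apply, Real.cos_neg, Real.sin_neg]
      linear_combination x.2 * Real.sin_sq_add_cos_sq θ
  continuous_toFun := LinearMap.continuous_of_finiteDimensional _
  continuous_invFun := LinearMap.continuous_of_finiteDimensional _

lemma rotLM_emb (θ : ℝ) : MeasurableEmbedding (⇑(rotLM θ)) := by
  have h : ⇑(rotHomeo θ) = ⇑(rotLM θ) := rfl
  exact h ▸ (rotHomeo θ).measurableEmbedding

section mass
variable {f : ℝ × ℝ → ℝ}

lemma mass_zero (hfsupp : ∀ x : ℝ × ℝ, 1 < x.1 ^ 2 + x.2 ^ 2 → f x = 0)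
    {S : Set (ℝ × ℝ)} (h : ∀ x : ℝ × ℝ, x.1 ^ 2 + x.2 ^ 2 ≤ 1 → x ∉ S) :
    ∫ x in S, f x = 0 :=
  setIntegral_eq_zero_of_forall_eq_zero fun x hx =>
    hfsupp x (lt_of_not_ge fun hle => h x hle hx)

lemma mass_full (hfi : Integrable f (volume : Measure (ℝ × ℝ)))
    (hfsupp : ∀ x : ℝ × ℝ, 1 < x.1 ^ 2 + x.2 ^ 2 → f x = 0)
    {S : Set (ℝ × ℝ)} (hS : MeasurableSet S)
    (h : ∀ x : ℝ × ℝ, x.1 ^ 2 + x.2 ^ 2 ≤ 1 → x ∈ S) :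
    ∫ x in S, f x = ∫ x, f x := by
  have h1 := integral_inter_add_diff (μ := (volume : Measure (ℝ × ℝ)))
    (s := Set.univ) (t := S) hS hfi.integrableOn
  have h2 : ∫ x in Set.univ \ S, f x = 0 :=
    setIntegral_eq_zero_of_forall_eq_zero fun x hx =>
      hfsupp x (lt_of_not_ge fun hle => hx.2 (h x hle))
  rw [Set.univ_inter, setIntegral_univ] at h1
  linarith

lemma mass_mono (hfnonneg : ∀ x, 0 ≤ f x)
    (hfi : Integrable f (volume : Measure (ℝ × ℝ)))
    (hfsupp : ∀ x : ℝ × ℝ, 1 < x.1 ^ 2 + x.2 ^ 2 → f x = 0)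
    {S T : Set (ℝ × ℝ)}
    (h : ∀ x : ℝ × ℝ, x.1 ^ 2 + x.2 ^ 2 ≤ 1 → x ∈ S → x ∈ T) :
    ∫ x in S, f x ≤ ∫ x in T, f x := by
  have hD : MeasurableSet {x : ℝ × ℝ | x.1 ^ 2 + x.2 ^ 2 ≤ 1} :=
    measurableSet_le (by fun_prop) measurable_const
  have hsplit := integral_inter_add_diff (μ := (volume : Measure (ℝ × ℝ)))
    (s := S) (t := {x : ℝ × ℝ | x.1 ^ 2 + x.2 ^ 2 ≤ 1}) hD hfi.integrableOn
  have hz : ∫ x in S \ {x : ℝ × ℝ | x.1 ^ 2 + x.2 ^ 2 ≤ 1}, f x = 0 :=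
    setIntegral_eq_zero_of_forall_eq_zero fun x hx => hfsupp x (lt_of_not_ge hx.2)
  have hmono : ∫ x in S ∩ {x : ℝ × ℝ | x.1 ^ 2 + x.2 ^ 2 ≤ 1}, f x ≤ ∫ x in T, f x := by
    refine setIntegral_mono_set hfi.integrableOn
      (Filter.Eventually.of_forall fun x => hfnonneg x)
      (HasSubset.Subset.eventuallyLE fun x hx => h x hx.2 hx.1)
  linarith

lemma cdf_line (g : ℝ × ℝ → ℝ) (hg : Integrable g (volume : Measure (ℝ × ℝ))) (a : ℝ) :
    cdfOf (fun s => ∫ t, g (s, t)) a = ∫ x in (Set.Iic a ×ˢ (Set.univ : Set ℝ)), g x := by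
  have hgi : IntegrableOn g (Set.Iic a ×ˢ (Set.univ : Set ℝ))
      ((volume : Measure ℝ).prod volume) := by
    rw [← Measure.volume_eq_prod]; exact hg.integrableOn
  unfold cdfOf
  rw [Measure.volume_eq_prod, setIntegral_prod g hgi]
  simp

end mass

lemma key_ineq (θ : ℝ) (hθ : 0 ≤ θ) {x : ℝ × ℝ} (hx : x.1 ^ 2 + x.2 ^ 2 ≤ 1) :
    |x.1 * Real.cos θ - x.2 * Real.sin θ - x.1| ≤ θ := by
  have h1 : 1 - θ ^ 2 / 2 ≤ Real.cos θ := Real.one_sub_sq_div_two_le_cos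
  have h2 := Real.sin_sq_add_cos_sq θ
  have h3 : Real.cos θ ≤ 1 := Real.cos_le_one θ
  have hcs : (x.1 * (Real.cos θ - 1) - x.2 * Real.sin θ) ^ 2 ≤
      (x.1 ^ 2 + x.2 ^ 2) * ((Real.cos θ - 1) ^ 2 + Real.sin θ ^ 2) := by
    nlinarith [sq_nonneg (x.1 * Real.sin θ + x.2 * (Real.cos θ - 1))]
  have h4 : (Real.cos θ - 1) ^ 2 + Real.sin θ ^ 2 = 2 - 2 * Real.cos θ := by
    linear_combination h2
  have h6 : (x.1 ^ 2 + x.2 ^ 2) * ((Real.cos θ - 1) ^ 2 + Real.sin θ ^ 2) ≤ θ ^ 2 := by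
    rw [h4]; nlinarith
  have hu2 : (x.1 * Real.cos θ - x.2 * Real.sin θ - x.1) ^ 2 ≤ θ ^ 2 := by
    nlinarith [hcs.trans h6]
  rw [abs_le]
  constructor <;> nlinarith [hu2]

lemma proj_le_one (θ : ℝ) {x : ℝ × ℝ} (hx : x.1 ^ 2 + x.2 ^ 2 ≤ 1) :
    x.1 * Real.cos θ - x.2 * Real.sin θ ≤ 1 := by
  have h2 := Real.sin_sq_add_cos_sq θ
  nlinarith [sq_nonneg (x.1 * Real.sin θ + x.2 * Real.cos θ),
    sq_nonneg (x.1 * Real.cos θ - x.2 * Real.sin θ - 1)]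

lemma neg_one_le_proj (θ : ℝ) {x : ℝ × ℝ} (hx : x.1 ^ 2 + x.2 ^ 2 ≤ 1) :
    -1 ≤ x.1 * Real.cos θ - x.2 * Real.sin θ := by
  have h2 := Real.sin_sq_add_cos_sq θ
  nlinarith [sq_nonneg (x.1 * Real.sin θ + x.2 * Real.cos θ),
    sq_nonneg (x.1 * Real.cos θ - x.2 * Real.sin θ + 1)]

lemma quantile_le_quantile_add (μ ν : ℝ → ℝ) (θ z : ℝ)
    (hc : ∀ a : ℝ, cdfOf μ a ≤ cdfOf ν (a + θ))
    (hbdν : BddBelow {t : ℝ | z ≤ cdfOf ν t})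
    (hneμ : {t : ℝ | z ≤ cdfOf μ t}.Nonempty) :
    quantileOf ν z ≤ quantileOf μ z + θ := by
  have h1 : ∀ t ∈ {t : ℝ | z ≤ cdfOf μ t}, quantileOf ν z ≤ t + θ := fun t ht =>
    csInf_le hbdν (le_trans ht (hc t))
  have h2 : quantileOf ν z - θ ≤ sInf {t : ℝ | z ≤ cdfOf μ t} :=
    le_csInf hneμ fun t ht => by linarith [h1 t ht]
  have h3 : quantileOf μ z = sInf {t : ℝ | z ≤ cdfOf μ t} := rfl
  linarith

/-- If `f` is a probability density supported on the closed unit disk and two lines through the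
origin differ by angle `θ ≥ 0`, then the `p`-Wasserstein distance between the corresponding 1-D
projections of `f` is at most `θ`: `d_{Wp}(P₀ f, P₀ (f ∘ R_θ⁻¹)) ≤ θ`. -/
theorem wasserstein_projection_rotation_stability
    (f : ℝ × ℝ → ℝ)
    (hfnonneg : ∀ x, 0 ≤ f x)
    (hfint : ∫ x : ℝ × ℝ, f x = 1)
    (hfsupp : ∀ x : ℝ × ℝ, 1 < x.1 ^ 2 + x.2 ^ 2 → f x = 0)
    (θ : ℝ) (hθ : 0 ≤ θ) (p : ℝ) (hp : 1 ≤ p) :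
    wasserstein p (lineProj f 0) (lineProj (rotImage θ f) 0) ≤ θ := by
  have hfi : Integrable f (volume : Measure (ℝ × ℝ)) := by
    by_contra h
    rw [integral_undef h] at hfint
    norm_num at hfint
  set U : ℝ → Set (ℝ × ℝ) := fun a => {x : ℝ × ℝ | x.1 ≤ a} with hU
  set T : ℝ → Set (ℝ × ℝ) :=
    fun a => {x : ℝ × ℝ | x.1 * Real.cos θ - x.2 * Real.sin θ ≤ a} with hT
  have hμ_eq : lineProj f 0 = fun s => ∫ t, f (s, t) := by
    funext s; simp [lineProj]
  have hcdfμ : ∀ a, cdfOf (lineProj f 0) a = ∫ x in U a, f x := by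
    intro a
    have hset : (Set.Iic a ×ˢ (Set.univ : Set ℝ)) = U a := by
      ext x; simp [hU]
    rw [hμ_eq, cdf_line f hfi a, hset]
  have hg : Integrable (fun x : ℝ × ℝ => f (rotLM θ x)) (volume : Measure (ℝ × ℝ)) :=
    ((rotLM_mp θ).integrable_comp_emb (rotLM_emb θ)).mpr hfi
  have hν_eq : lineProj (rotImage θ f) 0 = fun s => ∫ t, f (rotLM θ (s, t)) := by
    funext s
    simp [lineProj, rotImage, rotLM_apply]
  have hpre : ∀ a, (Set.Iic a ×ˢ (Set.univ : Set ℝ)) = (rotLM θ) ⁻¹' (T a) := by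
    intro a
    ext x
    simp only [Set.mem_prod, Set.mem_Iic, Set.mem_univ, and_true, Set.mem_preimage,
      rotLM_apply, hT, Set.mem_setOf_eq]
    have hid : (x.1 * Real.cos θ + x.2 * Real.sin θ) * Real.cos θ -
        (-x.1 * Real.sin θ + x.2 * Real.cos θ) * Real.sin θ = x.1 := by
      linear_combination x.1 * Real.sin_sq_add_cos_sq θ
    rw [hid]
  have hcdfν : ∀ a, cdfOf (lineProj (rotImage θ f) 0) a = ∫ x in T a, f x := by
    intro a
    rw [hν_eq, cdf_line _ hg a, hpre a,
      (rotLM_mp θ).setIntegral_preimage_emb (rotLM_emb θ) f (T a)]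
  have comp1 : ∀ a : ℝ, cdfOf (lineProj f 0) a ≤ cdfOf (lineProj (rotImage θ f) 0) (a + θ) := by
    intro a
    rw [hcdfμ, hcdfν]
    apply mass_mono hfnonneg hfi hfsupp
    intro x hx hxS
    have hk := key_ineq θ hθ hx
    rw [abs_le] at hk
    simp only [hU, hT, Set.mem_setOf_eq] at hxS ⊢
    linarith [hk.1, hk.2]
  have comp2 : ∀ a : ℝ, cdfOf (lineProj (rotImage θ f) 0) a ≤ cdfOf (lineProj f 0) (a + θ) := by
    intro a
    rw [hcdfμ, hcdfν]
    apply mass_mono hfnonneg hfi hfsupp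
    intro x hx hxS
    have hk := key_ineq θ hθ hx
    rw [abs_le] at hk
    simp only [hU, hT, Set.mem_setOf_eq] at hxS ⊢
    linarith [hk.1, hk.2]
  have hUmeas : ∀ a, MeasurableSet (U a) := fun a =>
    measurableSet_le measurable_fst measurable_const
  have hTmeas : ∀ a, MeasurableSet (T a) := fun a =>
    measurableSet_le (by fun_prop) measurable_const
  have hone_μ : cdfOf (lineProj f 0) 1 = 1 := by
    rw [hcdfμ, mass_full hfi hfsupp (hUmeas 1) ?_, hfint]
    intro x hx
    simp only [hU, Set.mem_setOf_eq]
    nlinarith [sq_nonneg (x.1 - 1), sq_nonneg x.2]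
  have hone_ν : cdfOf (lineProj (rotImage θ f) 0) 1 = 1 := by
    rw [hcdfν, mass_full hfi hfsupp (hTmeas 1) ?_, hfint]
    intro x hx
    simp only [hT, Set.mem_setOf_eq]
    exact proj_le_one θ hx
  have hQ : ∀ z ∈ Set.Ioo (0:ℝ) 1,
      |quantileOf (lineProj f 0) z - quantileOf (lineProj (rotImage θ f) 0) z| ≤ θ := by
    intro z hz
    have hneμ : ({t : ℝ | z ≤ cdfOf (lineProj f 0) t}).Nonempty :=
      ⟨1, by simp only [Set.mem_setOf_eq, hone_μ]; exact le_of_lt hz.2⟩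
    have hneν : ({t : ℝ | z ≤ cdfOf (lineProj (rotImage θ f) 0) t}).Nonempty :=
      ⟨1, by simp only [Set.mem_setOf_eq, hone_ν]; exact le_of_lt hz.2⟩
    have hbdμ : BddBelow {t : ℝ | z ≤ cdfOf (lineProj f 0) t} := by
      refine ⟨-2, fun t ht => ?_⟩
      by_contra hlt
      push_neg at hlt
      have h0 : cdfOf (lineProj f 0) t = 0 := by
        rw [hcdfμ]
        apply mass_zero hfsupp
        intro x hx hmem
        simp only [hU, Set.mem_setOf_eq] at hmem
        nlinarith [sq_nonneg (x.1 + 1), sq_nonneg x.2]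
      rw [Set.mem_setOf_eq, h0] at ht
      linarith [hz.1]
    have hbdν : BddBelow {t : ℝ | z ≤ cdfOf (lineProj (rotImage θ f) 0) t} := by
      refine ⟨-2, fun t ht => ?_⟩
      by_contra hlt
      push_neg at hlt
      have h0 : cdfOf (lineProj (rotImage θ f) 0) t = 0 := by
        rw [hcdfν]
        apply mass_zero hfsupp
        intro x hx hmem
        simp only [hT, Set.mem_setOf_eq] at hmem
        have := neg_one_le_proj θ hx
        linarith
      rw [Set.mem_setOf_eq, h0] at ht
      linarith [hz.1]
    have e1 := quantile_le_quantile_add (lineProj f 0) (lineProj (rotImage θ f) 0)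
      θ z comp1 hbdν hneμ
    have e2 := quantile_le_quantile_add (lineProj (rotImage θ f) 0) (lineProj f 0)
      θ z comp2 hbdμ hneν
    rw [abs_le]
    constructor <;> linarith
  have hp0 : (0:ℝ) < p := lt_of_lt_of_le one_pos hp
  have hpow_nonneg : 0 ≤ wassersteinPow p (lineProj f 0) (lineProj (rotImage θ f) 0) :=
    integral_nonneg fun z => Real.rpow_nonneg (abs_nonneg _) p
  have hpow_le : wassersteinPow p (lineProj f 0) (lineProj (rotImage θ f) 0) ≤ θ ^ p := by
    have hle : (∫ z in Set.Ioo (0:ℝ) 1,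
        |quantileOf (lineProj f 0) z - quantileOf (lineProj (rotImage θ f) 0) z| ^ p) ≤
        ∫ _z in Set.Ioo (0:ℝ) 1, θ ^ p := by
      apply integral_mono_of_nonneg
      · exact Filter.Eventually.of_forall fun z => Real.rpow_nonneg (abs_nonneg _) p
      · exact (integrableOn_const_iff (by finiteness)).mpr (Or.inr measure_Ioo_lt_top)
      · refine (ae_restrict_iff' measurableSet_Ioo).mpr
          (Filter.Eventually.of_forall fun z hz => ?_)
        exact Real.rpow_le_rpow (abs_nonneg _) (hQ z hz) (le_of_lt hp0)
    calc wassersteinPow p (lineProj f 0) (lineProj (rotImage θ f) 0)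
        ≤ ∫ _z in Set.Ioo (0:ℝ) 1, θ ^ p := hle
      _ = θ ^ p := by simp [Real.volume_Ioo]
  calc wasserstein p (lineProj f 0) (lineProj (rotImage θ f) 0)
      = (wassersteinPow p (lineProj f 0) (lineProj (rotImage θ f) 0)) ^ (1/p) := rfl
    _ ≤ (θ ^ p) ^ (1/p) := Real.rpow_le_rpow hpow_nonneg hpow_le (by positivity)
    _ = θ := by
        rw [← Real.rpow_mul hθ, mul_one_div_cancel (ne_of_gt hp0), Real.rpow_one]
end

section
/- Let f, g be probability densities on ℝ² supported on the closed unit disk, and define H(θ) = d_{W2}²(P_θ f, P_θ g), the squared 1-D 2-Wasserstein distance between the line projections of f and of g at angle θ. Then H is 8-Lipschitz: |H(θ₁) − H(θ₂)| ≤ 8 |θ₁ − θ₂| for all θ₁, θ₂ ∈ [0, 2π). -/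
open MeasureTheory Real Set

/-! ### Auxiliary lemmas -/

section Rotation

noncomputable def rotL (θ : ℝ) : (ℝ × ℝ) →ₗ[ℝ] (ℝ × ℝ) :=
  Matrix.toLin (Module.Basis.finTwoProd ℝ) (Module.Basis.finTwoProd ℝ)
    !![Real.cos θ, -Real.sin θ; Real.sin θ, Real.cos θ]

lemma rotL_apply (θ : ℝ) (p : ℝ × ℝ) :
    rotL θ p = (p.1 * Real.cos θ - p.2 * Real.sin θ, p.1 * Real.sin θ + p.2 * Real.cos θ) := by
  simp [rotL, Matrix.toLin_finTwoProd_apply]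
  constructor <;> ring

lemma rotL_det (θ : ℝ) : LinearMap.det (rotL θ) = 1 := by
  rw [rotL, LinearMap.det_toLin, Matrix.det_fin_two_of]
  ring_nf
  nlinarith [Real.sin_sq_add_cos_sq θ]

noncomputable def rotE (θ : ℝ) : (ℝ × ℝ) ≃ᵐ (ℝ × ℝ) where
  toFun p := (p.1 * Real.cos θ - p.2 * Real.sin θ, p.1 * Real.sin θ + p.2 * Real.cos θ)
  invFun p := (p.1 * Real.cos θ + p.2 * Real.sin θ, -p.1 * Real.sin θ + p.2 * Real.cos θ)
  left_inv p := by
    have h := Real.sin_sq_add_cos_sq θ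
    obtain ⟨x, y⟩ := p
    simp only [Prod.mk.injEq]
    exact ⟨by linear_combination x * h, by linear_combination y * h⟩
  right_inv p := by
    have h := Real.sin_sq_add_cos_sq θ
    obtain ⟨x, y⟩ := p
    simp only [Prod.mk.injEq]
    exact ⟨by linear_combination x * h, by linear_combination y * h⟩
  measurable_toFun := by apply Measurable.prod <;> dsimp <;> fun_prop
  measurable_invFun := by apply Measurable.prod <;> dsimp <;> fun_prop

lemma rotE_eq (θ : ℝ) : ⇑(rotE θ) = ⇑(rotL θ) := by
  funext p; rw [rotL_apply]; rfl

lemma rot_mp (θ : ℝ) : MeasurePreserving (rotE θ) volume volume := by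
  refine ⟨(rotE θ).measurable, ?_⟩
  rw [rotE_eq]
  rw [Measure.map_linearMap_addHaar_eq_smul_addHaar volume (by rw [rotL_det]; norm_num)]
  simp [rotL_det]

end Rotation

section MiniLemmas

lemma vol_Ico_union (a b : ℝ) :
    volume (Ico a b ∪ Ico b a) = ENNReal.ofReal |a - b| := by
  rcases le_total a b with h | h
  · rw [Ico_eq_empty (not_lt.2 h), union_empty, Real.volume_Ico, abs_sub_comm,
      abs_of_nonneg (by linarith)]
  · rw [Ico_eq_empty (not_lt.2 h), empty_union, Real.volume_Ico,
      abs_of_nonneg (by linarith)]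

lemma vol_Ioc_union (a b : ℝ) :
    volume (Ioc a b ∪ Ioc b a) = ENNReal.ofReal |a - b| := by
  rcases le_total a b with h | h
  · rw [Ioc_eq_empty (not_lt.2 h), union_empty, Real.volume_Ioc, abs_sub_comm,
      abs_of_nonneg (by linarith)]
  · rw [Ioc_eq_empty (not_lt.2 h), empty_union, Real.volume_Ioc,
      abs_of_nonneg (by linarith)]

lemma proj_diff_le {θ₁ θ₂ x1 x2 : ℝ} (hx : x1 ^ 2 + x2 ^ 2 ≤ 1) :
    |x1 * Real.cos θ₁ + x2 * Real.sin θ₁ - (x1 * Real.cos θ₂ + x2 * Real.sin θ₂)|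
      ≤ |θ₁ - θ₂| := by
  have hcs : Real.cos θ₁ * Real.cos θ₂ + Real.sin θ₁ * Real.sin θ₂ = Real.cos (θ₁ - θ₂) :=
    (Real.cos_sub θ₁ θ₂).symm
  have h1 : 1 - (θ₁ - θ₂) ^ 2 / 2 ≤ Real.cos (θ₁ - θ₂) := Real.one_sub_sq_div_two_le_cos
  have hc1 := Real.sin_sq_add_cos_sq θ₁
  have hc2 := Real.sin_sq_add_cos_sq θ₂
  have hCnn : (0:ℝ) ≤ (Real.cos θ₁ - Real.cos θ₂) ^ 2 + (Real.sin θ₁ - Real.sin θ₂) ^ 2 := by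
    positivity
  have hB : (Real.cos θ₁ - Real.cos θ₂) ^ 2 + (Real.sin θ₁ - Real.sin θ₂) ^ 2
      ≤ (θ₁ - θ₂) ^ 2 := by nlinarith
  have hA : (x1 * Real.cos θ₁ + x2 * Real.sin θ₁ - (x1 * Real.cos θ₂ + x2 * Real.sin θ₂)) ^ 2
      ≤ (Real.cos θ₁ - Real.cos θ₂) ^ 2 + (Real.sin θ₁ - Real.sin θ₂) ^ 2 := by
    nlinarith [sq_nonneg (x1 * (Real.sin θ₁ - Real.sin θ₂) - x2 * (Real.cos θ₁ - Real.cos θ₂)),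
      mul_nonneg hCnn (by linarith : (0:ℝ) ≤ 1 - (x1 ^ 2 + x2 ^ 2))]
  have hsq := le_trans hA hB
  rw [abs_le]
  constructor <;>
  nlinarith [abs_nonneg (θ₁ - θ₂), sq_abs (θ₁ - θ₂),
    le_abs_self (x1 * Real.cos θ₁ + x2 * Real.sin θ₁ - (x1 * Real.cos θ₂ + x2 * Real.sin θ₂)),
    neg_abs_le (x1 * Real.cos θ₁ + x2 * Real.sin θ₁ - (x1 * Real.cos θ₂ + x2 * Real.sin θ₂))]

lemma bounded_integrableOn {h : ℝ → ℝ} (hm : AEMeasurable h (volume.restrict (Ioo (0:ℝ) 1)))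
    {C : ℝ} (hb : ∀ z ∈ Ioo (0:ℝ) 1, |h z| ≤ C) : IntegrableOn h (Ioo (0:ℝ) 1) := by
  refine Integrable.mono' (f := h) (g := fun _ => C) ?_ hm.aestronglyMeasurable ?_
  · exact integrableOn_const (by rw [Real.volume_Ioo]; exact ENNReal.ofReal_ne_top)
  · exact (ae_restrict_iff' measurableSet_Ioo).2 (ae_of_all _ fun z hz => by
      rw [Real.norm_eq_abs]; exact hb z hz)

end MiniLemmas

section CdfFacts

variable {μ : ℝ → ℝ} (hμi : Integrable μ) (hμnn : ∀ s, 0 ≤ μ s)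
  (hμsupp : ∀ s : ℝ, 1 < s ^ 2 → μ s = 0) (hμmass : ∫ s, μ s = 1)

include hμi hμnn in
lemma cdf_mono : Monotone (cdfOf μ) := fun _ _ hab =>
  setIntegral_mono_set hμi.integrableOn (ae_of_all _ hμnn)
    (HasSubset.Subset.eventuallyLE (Iic_subset_Iic.2 hab))

include hμi in
lemma cdf_cont : Continuous (cdfOf μ) := by
  have h : ∀ t, cdfOf μ t = cdfOf μ 0 + ∫ x in (0:ℝ)..t, μ x := by
    intro t
    rw [← intervalIntegral.integral_Iic_sub_Iic hμi.integrableOn hμi.integrableOn]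
    unfold cdfOf; ring
  rw [show cdfOf μ = fun t => cdfOf μ 0 + ∫ x in (0:ℝ)..t, μ x from funext h]
  exact continuous_const.add (intervalIntegral.continuous_primitive
    (fun a b => hμi.intervalIntegrable) 0)

include hμsupp in
lemma cdf_zero_of_lt {t : ℝ} (ht : t < -1) : cdfOf μ t = 0 := by
  apply setIntegral_eq_zero_of_forall_eq_zero
  intro x hx
  exact hμsupp x (by simp only [mem_Iic] at hx; nlinarith)

include hμi hμsupp hμmass in
lemma cdf_one_of_ge {t : ℝ} (ht : 1 ≤ t) : cdfOf μ t = 1 := by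
  rw [← hμmass]
  rw [← integral_add_compl measurableSet_Iic hμi]
  have h0 : ∫ x in (Iic t)ᶜ, μ x = 0 := by
    apply setIntegral_eq_zero_of_forall_eq_zero
    intro x hx
    simp only [compl_Iic, mem_Ioi] at hx
    exact hμsupp x (by nlinarith)
  unfold cdfOf
  rw [h0, add_zero]

include hμsupp in
lemma quantile_set_lb {z : ℝ} (hz : 0 < z) :
    (-1 : ℝ) ∈ lowerBounds {t : ℝ | z ≤ cdfOf μ t} := by
  intro t ht
  by_contra h
  push_neg at h
  have h0 := cdf_zero_of_lt hμsupp (show t < -1 by linarith)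
  simp only [mem_setOf_eq, h0] at ht
  linarith

include hμi hμsupp hμmass in
lemma quantile_set_nonempty {z : ℝ} (hz : z ≤ 1) : (1:ℝ) ∈ {t : ℝ | z ≤ cdfOf μ t} := by
  simp only [mem_setOf_eq, cdf_one_of_ge hμi hμsupp hμmass le_rfl]; exact hz

include hμi hμnn hμsupp hμmass in
lemma quantile_mem {z : ℝ} (hz : z ∈ Ioo (0:ℝ) 1) : quantileOf μ z ∈ Icc (-1:ℝ) 1 := by
  constructor
  · exact le_csInf ⟨1, quantile_set_nonempty hμi hμsupp hμmass hz.2.le⟩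
      (quantile_set_lb hμsupp hz.1)
  · exact csInf_le ⟨-1, quantile_set_lb hμsupp hz.1⟩
      (quantile_set_nonempty hμi hμsupp hμmass hz.2.le)

include hμi hμnn hμsupp hμmass in
lemma quantile_le_iff {z : ℝ} (hz : z ∈ Ioo (0:ℝ) 1) (t : ℝ) :
    quantileOf μ z ≤ t ↔ z ≤ cdfOf μ t := by
  have hne : {t : ℝ | z ≤ cdfOf μ t}.Nonempty :=
    ⟨1, quantile_set_nonempty hμi hμsupp hμmass hz.2.le⟩
  have hbb : BddBelow {t : ℝ | z ≤ cdfOf μ t} :=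
    ⟨-1, quantile_set_lb hμsupp hz.1⟩
  have hcl : IsClosed {t : ℝ | z ≤ cdfOf μ t} := by
    have h0 : {t : ℝ | z ≤ cdfOf μ t} = (cdfOf μ) ⁻¹' (Ici z) := rfl
    rw [h0]
    exact IsClosed.preimage (cdf_cont hμi) isClosed_Ici
  constructor
  · intro h
    have hQ : quantileOf μ z ∈ {t : ℝ | z ≤ cdfOf μ t} := hcl.csInf_mem hne hbb
    exact le_trans hQ (cdf_mono hμi hμnn h)
  · intro h
    exact csInf_le hbb h

include hμi hμnn hμsupp hμmass in
lemma quantile_monoOn : MonotoneOn (quantileOf μ) (Ioo (0:ℝ) 1) := by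
  intro a ha b hb hab
  apply le_csInf ⟨1, quantile_set_nonempty hμi hμsupp hμmass hb.2.le⟩
  intro t ht
  exact csInf_le ⟨-1, quantile_set_lb hμsupp ha.1⟩ (le_trans hab ht)

end CdfFacts

section ProjFacts

variable {f : ℝ × ℝ → ℝ} (hfi : Integrable f)
  (hfsupp : ∀ x : ℝ × ℝ, 1 < x.1 ^ 2 + x.2 ^ 2 → f x = 0) (θ : ℝ)

include hfi in
lemma comp_rot_integrable : Integrable (fun p : ℝ × ℝ => f (rotE θ p)) volume :=
  ((rot_mp θ).integrable_comp_emb (rotE θ).measurableEmbedding).2 hfi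

include hfi in
lemma comp_rot_integrable_prod :
    Integrable (fun p : ℝ × ℝ => f (rotE θ p)) (volume.prod volume) := by
  rw [← Measure.volume_eq_prod ℝ ℝ]; exact comp_rot_integrable hfi θ

include hfi in
lemma lineProj_integrable : Integrable (lineProj f θ) := by
  have h := (comp_rot_integrable_prod hfi θ).integral_prod_left
  exact h

lemma lineProj_nonneg (hfnn : ∀ x, 0 ≤ f x) (s : ℝ) : 0 ≤ lineProj f θ s :=
  integral_nonneg fun t => hfnn _

include hfsupp in
lemma lineProj_eq_zero {s : ℝ} (hs : 1 < s ^ 2) : lineProj f θ s = 0 := by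
  have h : ∀ t : ℝ, f (s * Real.cos θ - t * Real.sin θ, s * Real.sin θ + t * Real.cos θ) = 0 := by
    intro t
    apply hfsupp
    have hsc := Real.sin_sq_add_cos_sq θ
    simp only
    nlinarith [sq_nonneg t]
  unfold lineProj
  simp only [h, integral_zero]

include hfi in
lemma lineProj_mass (hfint : ∫ x : ℝ × ℝ, f x = 1) : ∫ s, lineProj f θ s = 1 := by
  have h1 : ∫ s, lineProj f θ s = ∫ p : ℝ × ℝ, f (rotE θ p) ∂(volume.prod volume) :=
    integral_integral (comp_rot_integrable_prod hfi θ)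
  rw [h1, ← Measure.volume_eq_prod, (rot_mp θ).integral_comp' f, hfint]

include hfi in
lemma cdf_lineProj (t : ℝ) :
    cdfOf (lineProj f θ) t
      = ∫ x in {x : ℝ × ℝ | x.1 * Real.cos θ + x.2 * Real.sin θ ≤ t}, f x := by
  have hpre : (Set.Iic t ×ˢ (univ : Set ℝ))
      = (rotE θ) ⁻¹' {x : ℝ × ℝ | x.1 * Real.cos θ + x.2 * Real.sin θ ≤ t} := by
    ext ⟨s, u⟩
    have h := Real.sin_sq_add_cos_sq θ
    simp only [mem_prod, mem_Iic, mem_univ, and_true, mem_preimage, mem_setOf_eq]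
    constructor
    · intro hs
      calc (s * Real.cos θ - u * Real.sin θ) * Real.cos θ
            + (s * Real.sin θ + u * Real.cos θ) * Real.sin θ
          = s := by linear_combination s * h
        _ ≤ t := hs
    · intro hs
      calc s = (s * Real.cos θ - u * Real.sin θ) * Real.cos θ
            + (s * Real.sin θ + u * Real.cos θ) * Real.sin θ := by linear_combination (-s) * h
        _ ≤ t := hs
  have hint : Integrable (fun p : ℝ × ℝ => f (rotE θ p))
      ((volume.restrict (Set.Iic t)).prod volume) := by
    have h := (comp_rot_integrable_prod hfi θ).restrict (s := Set.Iic t ×ˢ (univ : Set ℝ))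
    rwa [← Measure.prod_restrict, Measure.restrict_univ] at h
  have h2 : cdfOf (lineProj f θ) t
      = ∫ p in Set.Iic t ×ˢ (univ : Set ℝ), f (rotE θ p) ∂(volume.prod volume) := by
    unfold cdfOf
    rw [← Measure.prod_restrict, Measure.restrict_univ]
    exact integral_integral hint
  rw [h2, hpre, ← Measure.volume_eq_prod]
  exact (rot_mp θ).setIntegral_preimage_emb (rotE θ).measurableEmbedding f _

end ProjFacts

section ZSide

variable {μ1 μ2 : ℝ → ℝ}
  (h1i : Integrable μ1) (h1nn : ∀ s, 0 ≤ μ1 s)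
  (h1supp : ∀ s : ℝ, 1 < s ^ 2 → μ1 s = 0) (h1mass : ∫ s, μ1 s = 1)
  (h2i : Integrable μ2) (h2nn : ∀ s, 0 ≤ μ2 s)
  (h2supp : ∀ s : ℝ, 1 < s ^ 2 → μ2 s = 0) (h2mass : ∫ s, μ2 s = 1)

include h1i h1nn h1supp h1mass h2i h2nn h2supp h2mass in
lemma quantile_L1_bound {Δ : ℝ} (hΔ : 0 ≤ Δ)
    (hF : ∫⁻ t, ENNReal.ofReal |cdfOf μ1 t - cdfOf μ2 t| ≤ ENNReal.ofReal Δ) :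
    ∫ z in Ioo (0:ℝ) 1, |quantileOf μ1 z - quantileOf μ2 z| ≤ Δ := by
  have hq1 : AEMeasurable (quantileOf μ1) (volume.restrict (Ioo (0:ℝ) 1)) :=
    aemeasurable_restrict_of_monotoneOn measurableSet_Ioo
      (quantile_monoOn h1i h1nn h1supp h1mass)
  have hq2 : AEMeasurable (quantileOf μ2) (volume.restrict (Ioo (0:ℝ) 1)) :=
    aemeasurable_restrict_of_monotoneOn measurableSet_Ioo
      (quantile_monoOn h2i h2nn h2supp h2mass)
  have hgm : AEStronglyMeasurable (fun z => |quantileOf μ1 z - quantileOf μ2 z|)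
      (volume.restrict (Ioo (0:ℝ) 1)) :=
    (measurable_abs.comp_aemeasurable (hq1.sub hq2)).aestronglyMeasurable
  rw [integral_eq_lintegral_of_nonneg_ae (ae_of_all _ fun z => abs_nonneg _) hgm]
  apply ENNReal.toReal_le_of_le_ofReal hΔ
  set S : Set (ℝ × ℝ) := ({p : ℝ × ℝ | p.1 ≤ cdfOf μ1 p.2} \ {p | p.1 ≤ cdfOf μ2 p.2})
      ∪ ({p : ℝ × ℝ | p.1 ≤ cdfOf μ2 p.2} \ {p | p.1 ≤ cdfOf μ1 p.2}) with hSdef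
  have hm1 : MeasurableSet {p : ℝ × ℝ | p.1 ≤ cdfOf μ1 p.2} :=
    measurableSet_le measurable_fst ((cdf_cont h1i).measurable.comp measurable_snd)
  have hm2 : MeasurableSet {p : ℝ × ℝ | p.1 ≤ cdfOf μ2 p.2} :=
    measurableSet_le measurable_fst ((cdf_cont h2i).measurable.comp measurable_snd)
  have hS : MeasurableSet S := (hm1.diff hm2).union (hm2.diff hm1)
  have step1 : ∀ z ∈ Ioo (0:ℝ) 1, ENNReal.ofReal |quantileOf μ1 z - quantileOf μ2 z|
      = ∫⁻ t, S.indicator 1 (z, t) := by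
    intro z hz
    have e1 : ∀ t : ℝ, ((z, t) ∈ S) ↔
        t ∈ (Ico (quantileOf μ1 z) (quantileOf μ2 z)
          ∪ Ico (quantileOf μ2 z) (quantileOf μ1 z)) := by
      intro t
      have i1 := quantile_le_iff h1i h1nn h1supp h1mass hz t
      have i2 := quantile_le_iff h2i h2nn h2supp h2mass hz t
      simp only [hSdef, mem_union, mem_diff, mem_setOf_eq, mem_Ico, lt_iff_not_ge, ← i1, ← i2]
    calc ENNReal.ofReal |quantileOf μ1 z - quantileOf μ2 z|
        = volume (Ico (quantileOf μ1 z) (quantileOf μ2 z)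
            ∪ Ico (quantileOf μ2 z) (quantileOf μ1 z)) := (vol_Ico_union _ _).symm
      _ = ∫⁻ t, (Ico (quantileOf μ1 z) (quantileOf μ2 z)
            ∪ Ico (quantileOf μ2 z) (quantileOf μ1 z)).indicator 1 t :=
          (lintegral_indicator_one (measurableSet_Ico.union measurableSet_Ico)).symm
      _ = ∫⁻ t, S.indicator 1 (z, t) := by
          apply lintegral_congr
          intro t
          simp only [Set.indicator_apply, Pi.one_apply, e1 t]
  calc ∫⁻ z in Ioo (0:ℝ) 1, ENNReal.ofReal |quantileOf μ1 z - quantileOf μ2 z|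
      = ∫⁻ z in Ioo (0:ℝ) 1, ∫⁻ t, S.indicator 1 (z, t) :=
        setLIntegral_congr_fun measurableSet_Ioo step1
    _ ≤ ∫⁻ z, ∫⁻ t, S.indicator 1 (z, t) := setLIntegral_le_lintegral _ _
    _ = ∫⁻ t, ∫⁻ z, S.indicator 1 (z, t) :=
        lintegral_lintegral_swap ((measurable_one.indicator hS).aemeasurable)
    _ = ∫⁻ t, ENNReal.ofReal |cdfOf μ1 t - cdfOf μ2 t| := by
        apply lintegral_congr
        intro t
        have e2 : ∀ z : ℝ, ((z, t) ∈ S) ↔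
            z ∈ (Ioc (cdfOf μ2 t) (cdfOf μ1 t) ∪ Ioc (cdfOf μ1 t) (cdfOf μ2 t)) := by
          intro z
          simp only [hSdef, mem_union, mem_diff, mem_setOf_eq, mem_Ioc, lt_iff_not_ge]
          tauto
        calc ∫⁻ z, S.indicator 1 (z, t)
            = ∫⁻ z, (Ioc (cdfOf μ2 t) (cdfOf μ1 t)
                ∪ Ioc (cdfOf μ1 t) (cdfOf μ2 t)).indicator 1 z := by
              apply lintegral_congr
              intro z
              simp only [Set.indicator_apply, Pi.one_apply, e2 z]
          _ = volume (Ioc (cdfOf μ2 t) (cdfOf μ1 t) ∪ Ioc (cdfOf μ1 t) (cdfOf μ2 t)) :=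
              lintegral_indicator_one (measurableSet_Ioc.union measurableSet_Ioc)
          _ = ENNReal.ofReal |cdfOf μ1 t - cdfOf μ2 t| := by
              rw [vol_Ioc_union, abs_sub_comm]
    _ ≤ ENNReal.ofReal Δ := hF

end ZSide
section TSide
variable {f : ℝ × ℝ → ℝ} (hfi : Integrable f) (hfnn : ∀ x, 0 ≤ f x)
  (hfsupp : ∀ x : ℝ × ℝ, 1 < x.1 ^ 2 + x.2 ^ 2 → f x = 0) (hfint : ∫ x : ℝ × ℝ, f x = 1)

include hfi hfnn hfsupp hfint in
lemma cdf_L1_bound (θ₁ θ₂ : ℝ) :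
    ∫⁻ t, ENNReal.ofReal |cdfOf (lineProj f θ₁) t - cdfOf (lineProj f θ₂) t|
      ≤ ENNReal.ofReal |θ₁ - θ₂| := by
  set a1 : ℝ × ℝ → ℝ := fun x => x.1 * Real.cos θ₁ + x.2 * Real.sin θ₁ with ha1
  set a2 : ℝ × ℝ → ℝ := fun x => x.1 * Real.cos θ₂ + x.2 * Real.sin θ₂ with ha2
  have hma1 : Measurable a1 := by fun_prop
  have hma2 : Measurable a2 := by fun_prop
  have hA1 : ∀ t : ℝ, MeasurableSet {x : ℝ × ℝ | a1 x ≤ t} := fun t =>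
    measurableSet_le hma1 measurable_const
  have hA2 : ∀ t : ℝ, MeasurableSet {x : ℝ × ℝ | a2 x ≤ t} := fun t =>
    measurableSet_le hma2 measurable_const
  set D : ℝ → Set (ℝ × ℝ) := fun t =>
    ({x | a1 x ≤ t} \ {x | a2 x ≤ t}) ∪ ({x | a2 x ≤ t} \ {x | a1 x ≤ t}) with hD
  have hDm : ∀ t, MeasurableSet (D t) := fun t => ((hA1 t).diff (hA2 t)).union ((hA2 t).diff (hA1 t))
  set T : Set ((ℝ × ℝ) × ℝ) := ({q | a1 q.1 ≤ q.2} \ {q | a2 q.1 ≤ q.2})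
      ∪ ({q | a2 q.1 ≤ q.2} \ {q | a1 q.1 ≤ q.2}) with hT
  have hTm : MeasurableSet T := by
    have h1 : MeasurableSet {q : (ℝ × ℝ) × ℝ | a1 q.1 ≤ q.2} :=
      measurableSet_le (hma1.comp measurable_fst) measurable_snd
    have h2 : MeasurableSet {q : (ℝ × ℝ) × ℝ | a2 q.1 ≤ q.2} :=
      measurableSet_le (hma2.comp measurable_fst) measurable_snd
    exact (h1.diff h2).union (h2.diff h1)
  have hmemT : ∀ (x : ℝ × ℝ) (t : ℝ), ((x, t) ∈ T) ↔ x ∈ D t := by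
    intro x t
    simp only [hT, hD, mem_union, mem_diff, mem_setOf_eq]
  have hdiffbound : ∀ t : ℝ, |cdfOf (lineProj f θ₁) t - cdfOf (lineProj f θ₂) t|
      ≤ ∫ x in D t, f x := by
    intro t
    rw [cdf_lineProj hfi θ₁ t, cdf_lineProj hfi θ₂ t]
    have d1 : ∫ x in {x : ℝ × ℝ | a1 x ≤ t}, f x
        = (∫ x in ({x | a1 x ≤ t} ∩ {x | a2 x ≤ t}), f x)
          + ∫ x in ({x | a1 x ≤ t} \ {x | a2 x ≤ t}), f x := by
      rw [← setIntegral_union (disjoint_sdiff_self_right.mono_left inter_subset_right)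
        ((hA1 t).diff (hA2 t)) hfi.integrableOn hfi.integrableOn, inter_union_diff]
    have d2 : ∫ x in {x : ℝ × ℝ | a2 x ≤ t}, f x
        = (∫ x in ({x | a1 x ≤ t} ∩ {x | a2 x ≤ t}), f x)
          + ∫ x in ({x | a2 x ≤ t} \ {x | a1 x ≤ t}), f x := by
      rw [← setIntegral_union (disjoint_sdiff_self_right.mono_left inter_subset_left)
        ((hA2 t).diff (hA1 t)) hfi.integrableOn hfi.integrableOn, inter_comm,
        inter_union_diff]
    have dD : ∫ x in D t, f x
        = (∫ x in ({x | a1 x ≤ t} \ {x | a2 x ≤ t}), f x)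
          + ∫ x in ({x | a2 x ≤ t} \ {x | a1 x ≤ t}), f x := by
      rw [hD]
      exact setIntegral_union (disjoint_sdiff_sdiff) ((hA2 t).diff (hA1 t))
        hfi.integrableOn hfi.integrableOn
    have n1 : 0 ≤ ∫ x in ({x | a1 x ≤ t} \ {x | a2 x ≤ t}), f x :=
      setIntegral_nonneg ((hA1 t).diff (hA2 t)) fun x _ => hfnn x
    have n2 : 0 ≤ ∫ x in ({x | a2 x ≤ t} \ {x | a1 x ≤ t}), f x :=
      setIntegral_nonneg ((hA2 t).diff (hA1 t)) fun x _ => hfnn x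
    rw [d1, d2, dD]
    rw [abs_le]
    constructor <;> linarith
  calc ∫⁻ t, ENNReal.ofReal |cdfOf (lineProj f θ₁) t - cdfOf (lineProj f θ₂) t|
      ≤ ∫⁻ t, ENNReal.ofReal (∫ x in D t, f x) :=
        lintegral_mono fun t => ENNReal.ofReal_le_ofReal (hdiffbound t)
    _ = ∫⁻ t, ∫⁻ x, T.indicator (fun q => ENNReal.ofReal (f q.1)) (x, t) := by
        apply lintegral_congr
        intro t
        rw [ofReal_integral_eq_lintegral_ofReal hfi.integrableOn
          (ae_of_all _ fun x => hfnn x), ← lintegral_indicator (hDm t)]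
        apply lintegral_congr
        intro x
        simp only [Set.indicator_apply, hmemT x t]
    _ = ∫⁻ x, ∫⁻ t, T.indicator (fun q => ENNReal.ofReal (f q.1)) (x, t) := by
        apply lintegral_lintegral_swap
        have hfa : AEMeasurable (fun q : (ℝ × ℝ) × ℝ => ENNReal.ofReal (f q.1))
            (volume.prod volume) := by
          have h0 : AEMeasurable f (volume : Measure (ℝ × ℝ)) := hfi.aemeasurable
          exact (ENNReal.measurable_ofReal.comp_aemeasurable
            (h0.comp_quasiMeasurePreserving Measure.quasiMeasurePreserving_fst))
        have hind : AEMeasurable (T.indicator (fun q => ENNReal.ofReal (f q.1)))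
            (volume.prod volume) := hfa.indicator hTm
        exact hind.comp_quasiMeasurePreserving
          Measure.measurePreserving_swap.quasiMeasurePreserving
    _ = ∫⁻ x : ℝ × ℝ, ENNReal.ofReal (f x) * ENNReal.ofReal |a1 x - a2 x| := by
        apply lintegral_congr
        intro x
        have hpt : ∀ t : ℝ, T.indicator (fun q => ENNReal.ofReal (f q.1)) (x, t)
            = ENNReal.ofReal (f x) * (Ico (a1 x) (a2 x) ∪ Ico (a2 x) (a1 x)).indicator 1 t := by
          intro t
          have hiff : ((x, t) ∈ T) ↔ t ∈ (Ico (a1 x) (a2 x) ∪ Ico (a2 x) (a1 x)) := by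
            rw [hmemT x t]
            simp only [hD, mem_union, mem_diff, mem_setOf_eq, mem_Ico, lt_iff_not_ge]
          simp only [Set.indicator_apply, Pi.one_apply, hiff]
          split_ifs <;> simp
        simp_rw [hpt]
        rw [lintegral_const_mul' _ _ ENNReal.ofReal_ne_top,
          lintegral_indicator_one (measurableSet_Ico.union measurableSet_Ico),
          vol_Ico_union]
    _ ≤ ∫⁻ x : ℝ × ℝ, ENNReal.ofReal (f x) * ENNReal.ofReal |θ₁ - θ₂| := by
        apply lintegral_mono
        intro x
        by_cases hfx : f x = 0
        · simp [hfx]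
        · have hx : x.1 ^ 2 + x.2 ^ 2 ≤ 1 := by
            by_contra h
            exact hfx (hfsupp x (lt_of_not_ge h))
          exact mul_le_mul_right (ENNReal.ofReal_le_ofReal (proj_diff_le hx)) _
    _ = ENNReal.ofReal |θ₁ - θ₂| := by
        rw [lintegral_mul_const' _ _ ENNReal.ofReal_ne_top,
          ← ofReal_integral_eq_lintegral_ofReal hfi (ae_of_all _ hfnn), hfint,
          ENNReal.ofReal_one, one_mul]

end TSide

/-- The integrand of the sliced 2-Wasserstein distance is `8`-Lipschitz in the angle:
for probability densities `f, g` supported on the closed unit disk and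
`H(θ) = d_{W2}²(P_θ f, P_θ g)`, one has `|H(θ₁) − H(θ₂)| ≤ 8 |θ₁ − θ₂|` for
`θ₁, θ₂ ∈ [0, 2π)`. -/
theorem sliced_wasserstein_integrand_lipschitz
    (f g : ℝ × ℝ → ℝ)
    (hfnonneg : ∀ x, 0 ≤ f x) (hgnonneg : ∀ x, 0 ≤ g x)
    (hfint : ∫ x : ℝ × ℝ, f x = 1) (hgint : ∫ x : ℝ × ℝ, g x = 1)
    (hfsupp : ∀ x : ℝ × ℝ, 1 < x.1 ^ 2 + x.2 ^ 2 → f x = 0)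
    (hgsupp : ∀ x : ℝ × ℝ, 1 < x.1 ^ 2 + x.2 ^ 2 → g x = 0)
    (θ₁ θ₂ : ℝ) (hθ₁ : θ₁ ∈ Set.Ico (0:ℝ) (2 * π)) (hθ₂ : θ₂ ∈ Set.Ico (0:ℝ) (2 * π)) :
    |wassersteinPow 2 (lineProj f θ₁) (lineProj g θ₁)
      - wassersteinPow 2 (lineProj f θ₂) (lineProj g θ₂)| ≤ 8 * |θ₁ - θ₂| := by
  have hfi : Integrable f := by
    by_contra h
    rw [integral_undef h] at hfint
    norm_num at hfint
  have hgi : Integrable g := by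
    by_contra h
    rw [integral_undef h] at hgint
    norm_num at hgint
  have key : ∀ φ₁ φ₂ : ℝ,
      wassersteinPow 2 (lineProj f φ₁) (lineProj g φ₁)
        - wassersteinPow 2 (lineProj f φ₂) (lineProj g φ₂) ≤ 8 * |φ₁ - φ₂| := by
    intro φ₁ φ₂
    -- basic facts for the four projected densities
    have pA1i := lineProj_integrable hfi φ₁
    have pA2i := lineProj_integrable hfi φ₂
    have pB1i := lineProj_integrable hgi φ₁
    have pB2i := lineProj_integrable hgi φ₂
    have pA1n := lineProj_nonneg φ₁ hfnonneg
    have pA2n := lineProj_nonneg φ₂ hfnonneg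
    have pB1n := lineProj_nonneg φ₁ hgnonneg
    have pB2n := lineProj_nonneg φ₂ hgnonneg
    have pA1s : ∀ s : ℝ, 1 < s ^ 2 → lineProj f φ₁ s = 0 := fun s hs =>
      lineProj_eq_zero hfsupp φ₁ hs
    have pA2s : ∀ s : ℝ, 1 < s ^ 2 → lineProj f φ₂ s = 0 := fun s hs =>
      lineProj_eq_zero hfsupp φ₂ hs
    have pB1s : ∀ s : ℝ, 1 < s ^ 2 → lineProj g φ₁ s = 0 := fun s hs =>
      lineProj_eq_zero hgsupp φ₁ hs
    have pB2s : ∀ s : ℝ, 1 < s ^ 2 → lineProj g φ₂ s = 0 := fun s hs =>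
      lineProj_eq_zero hgsupp φ₂ hs
    have pA1m := lineProj_mass hfi φ₁ hfint
    have pA2m := lineProj_mass hfi φ₂ hfint
    have pB1m := lineProj_mass hgi φ₁ hgint
    have pB2m := lineProj_mass hgi φ₂ hgint
    set A1 := quantileOf (lineProj f φ₁) with hA1
    set A2 := quantileOf (lineProj f φ₂) with hA2
    set B1 := quantileOf (lineProj g φ₁) with hB1
    set B2 := quantileOf (lineProj g φ₂) with hB2
    have bA1 : ∀ z ∈ Ioo (0:ℝ) 1, A1 z ∈ Icc (-1:ℝ) 1 := fun z hz =>
      quantile_mem pA1i pA1n pA1s pA1m hz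
    have bA2 : ∀ z ∈ Ioo (0:ℝ) 1, A2 z ∈ Icc (-1:ℝ) 1 := fun z hz =>
      quantile_mem pA2i pA2n pA2s pA2m hz
    have bB1 : ∀ z ∈ Ioo (0:ℝ) 1, B1 z ∈ Icc (-1:ℝ) 1 := fun z hz =>
      quantile_mem pB1i pB1n pB1s pB1m hz
    have bB2 : ∀ z ∈ Ioo (0:ℝ) 1, B2 z ∈ Icc (-1:ℝ) 1 := fun z hz =>
      quantile_mem pB2i pB2n pB2s pB2m hz
    have mA1 : AEMeasurable A1 (volume.restrict (Ioo (0:ℝ) 1)) :=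
      aemeasurable_restrict_of_monotoneOn measurableSet_Ioo (quantile_monoOn pA1i pA1n pA1s pA1m)
    have mA2 : AEMeasurable A2 (volume.restrict (Ioo (0:ℝ) 1)) :=
      aemeasurable_restrict_of_monotoneOn measurableSet_Ioo (quantile_monoOn pA2i pA2n pA2s pA2m)
    have mB1 : AEMeasurable B1 (volume.restrict (Ioo (0:ℝ) 1)) :=
      aemeasurable_restrict_of_monotoneOn measurableSet_Ioo (quantile_monoOn pB1i pB1n pB1s pB1m)
    have mB2 : AEMeasurable B2 (volume.restrict (Ioo (0:ℝ) 1)) :=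
      aemeasurable_restrict_of_monotoneOn measurableSet_Ioo (quantile_monoOn pB2i pB2n pB2s pB2m)
    -- rewrite the rpow-2 integrand as a square
    have hrpow : ∀ q : ℝ, |q| ^ (2:ℝ) = q ^ 2 := by
      intro q
      rw [show (2:ℝ) = ((2:ℕ):ℝ) by norm_num, Real.rpow_natCast, sq_abs]
    have wp1 : wassersteinPow 2 (lineProj f φ₁) (lineProj g φ₁)
        = ∫ z in Ioo (0:ℝ) 1, (A1 z - B1 z) ^ 2 := by
      unfold wassersteinPow
      simp_rw [hrpow]
      rfl
    have wp2 : wassersteinPow 2 (lineProj f φ₂) (lineProj g φ₂)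
        = ∫ z in Ioo (0:ℝ) 1, (A2 z - B2 z) ^ 2 := by
      unfold wassersteinPow
      simp_rw [hrpow]
      rfl
    -- integrability
    have hu : IntegrableOn (fun z => (A1 z - B1 z) ^ 2) (Ioo (0:ℝ) 1) := by
      apply bounded_integrableOn ((mA1.sub mB1).pow_const 2) (C := 4)
      intro z hz
      obtain ⟨h1, h2⟩ := bA1 z hz
      obtain ⟨h3, h4⟩ := bB1 z hz
      rw [abs_le, Pi.sub_apply]
      constructor <;> nlinarith [mul_nonneg (show (0:ℝ) ≤ 2 - (A1 z - B1 z) by linarith)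
        (show (0:ℝ) ≤ 2 + (A1 z - B1 z) by linarith), sq_nonneg (A1 z - B1 z)]
    have hv : IntegrableOn (fun z => (A2 z - B2 z) ^ 2) (Ioo (0:ℝ) 1) := by
      apply bounded_integrableOn ((mA2.sub mB2).pow_const 2) (C := 4)
      intro z hz
      obtain ⟨h1, h2⟩ := bA2 z hz
      obtain ⟨h3, h4⟩ := bB2 z hz
      rw [abs_le, Pi.sub_apply]
      constructor <;> nlinarith [mul_nonneg (show (0:ℝ) ≤ 2 - (A2 z - B2 z) by linarith)
        (show (0:ℝ) ≤ 2 + (A2 z - B2 z) by linarith), sq_nonneg (A2 z - B2 z)]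
    have hIf : IntegrableOn (fun z => |A1 z - A2 z|) (Ioo (0:ℝ) 1) := by
      apply bounded_integrableOn (measurable_abs.comp_aemeasurable (mA1.sub mA2)) (C := 2)
      intro z hz
      obtain ⟨h1, h2⟩ := bA1 z hz
      obtain ⟨h3, h4⟩ := bA2 z hz
      have hb2 : |A1 z - A2 z| ≤ 2 := by
        rw [abs_le]
        constructor <;> nlinarith
      calc |(|A1 z - A2 z|)| = |A1 z - A2 z| := abs_of_nonneg (abs_nonneg _)
        _ ≤ 2 := hb2
    have hIg : IntegrableOn (fun z => |B1 z - B2 z|) (Ioo (0:ℝ) 1) := by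
      apply bounded_integrableOn (measurable_abs.comp_aemeasurable (mB1.sub mB2)) (C := 2)
      intro z hz
      obtain ⟨h1, h2⟩ := bB1 z hz
      obtain ⟨h3, h4⟩ := bB2 z hz
      have hb2 : |B1 z - B2 z| ≤ 2 := by
        rw [abs_le]
        constructor <;> nlinarith
      calc |(|B1 z - B2 z|)| = |B1 z - B2 z| := abs_of_nonneg (abs_nonneg _)
        _ ≤ 2 := hb2
    have hw : IntegrableOn (fun z => 4 * (|A1 z - A2 z| + |B1 z - B2 z|)) (Ioo (0:ℝ) 1) :=
      (hIf.add hIg).const_mul 4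
    -- pointwise bound
    have hpt : ∀ z ∈ Ioo (0:ℝ) 1,
        (A1 z - B1 z) ^ 2 - (A2 z - B2 z) ^ 2
          ≤ 4 * (|A1 z - A2 z| + |B1 z - B2 z|) := by
      intro z hz
      obtain ⟨a1, a2⟩ := bA1 z hz
      obtain ⟨a3, a4⟩ := bA2 z hz
      obtain ⟨a5, a6⟩ := bB1 z hz
      obtain ⟨a7, a8⟩ := bB2 z hz
      have p1 : A1 z - A2 z ≤ |A1 z - A2 z| := le_abs_self _
      have p2 : -(|A1 z - A2 z|) ≤ A1 z - A2 z := neg_abs_le _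
      have p3 : B1 z - B2 z ≤ |B1 z - B2 z| := le_abs_self _
      have p4 : -(|B1 z - B2 z|) ≤ B1 z - B2 z := neg_abs_le _
      nlinarith [mul_nonneg
          (show (0:ℝ) ≤ |A1 z - A2 z| + |B1 z - B2 z| - ((A1 z - B1 z) - (A2 z - B2 z)) by
            linarith)
          (show (0:ℝ) ≤ 4 + ((A1 z - B1 z) + (A2 z - B2 z)) by linarith),
        mul_nonneg
          (show (0:ℝ) ≤ |A1 z - A2 z| + |B1 z - B2 z| + ((A1 z - B1 z) - (A2 z - B2 z)) by
            linarith)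
          (show (0:ℝ) ≤ 4 - ((A1 z - B1 z) + (A2 z - B2 z)) by linarith)]
    -- L1 bounds on quantile differences
    have hIfb : ∫ z in Ioo (0:ℝ) 1, |A1 z - A2 z| ≤ |φ₁ - φ₂| :=
      quantile_L1_bound pA1i pA1n pA1s pA1m pA2i pA2n pA2s pA2m (abs_nonneg _)
        (cdf_L1_bound hfi hfnonneg hfsupp hfint φ₁ φ₂)
    have hIgb : ∫ z in Ioo (0:ℝ) 1, |B1 z - B2 z| ≤ |φ₁ - φ₂| :=
      quantile_L1_bound pB1i pB1n pB1s pB1m pB2i pB2n pB2s pB2m (abs_nonneg _)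
        (cdf_L1_bound hgi hgnonneg hgsupp hgint φ₁ φ₂)
    rw [wp1, wp2, ← integral_sub hu hv]
    calc ∫ z in Ioo (0:ℝ) 1, ((A1 z - B1 z) ^ 2 - (A2 z - B2 z) ^ 2)
        ≤ ∫ z in Ioo (0:ℝ) 1, 4 * (|A1 z - A2 z| + |B1 z - B2 z|) := by
          apply integral_mono_ae (hu.sub hv) hw
          exact (ae_restrict_iff' measurableSet_Ioo).2 (ae_of_all _ hpt)
      _ = 4 * ((∫ z in Ioo (0:ℝ) 1, |A1 z - A2 z|) + ∫ z in Ioo (0:ℝ) 1, |B1 z - B2 z|) := by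
          rw [integral_const_mul, integral_add hIf hIg]
      _ ≤ 4 * (|φ₁ - φ₂| + |φ₁ - φ₂|) := by
          have := hIfb
          have := hIgb
          nlinarith
      _ = 8 * |φ₁ - φ₂| := by ring
  rw [abs_sub_le_iff]
  refine ⟨key θ₁ θ₂, ?_⟩
  have h := key θ₂ θ₁
  rwa [abs_sub_comm θ₂ θ₁] at h
end
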